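/- Let R = F2[x^{±1}, y^{±1}] with involution f ↦ f̄ (x ↦ x^{-1}, y ↦ y^{-1}). There do not exist f1, f2 ∈ R satisfying all three equations: (1 + x^{-1})f1 + (1 + x)f̄1 = 0, (1 + y^{-1})f2 + (1 + y)f̄2 = 0, and (1 + x^{-1})f1 + (1 + y)f̄2 = 1 + x^{-1}y. -/

import Mathlib

/-- The Laurent polynomial ring `F₂[x^{±1}, y^{±1}]` in two variables. -/
abbrev R2 : Type := AddMonoidAlgebra (ZMod 2) (Fin 2 → ℤ)

/-- The monomial `x^a y^b`. -/
noncomputable def m2 (a b : ℤ) : R2 := AddMonoidAlgebra.single ![a, b] 1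

/-- The involution `f ↦ f̄` given by `x ↦ x⁻¹`, `y ↦ y⁻¹`. -/
noncomputable def bar2 : R2 ≃ₐ[ZMod 2] R2 :=
  AddMonoidAlgebra.domCongr (ZMod 2) (ZMod 2) (AddEquiv.neg (Fin 2 → ℤ))

lemma bar2_single (v : Fin 2 → ℤ) (r : ZMod 2) :
    bar2 (AddMonoidAlgebra.single v r) = AddMonoidAlgebra.single (-v) r := by
  simp [bar2, AddMonoidAlgebra.domCongr_single]

lemma bar2_bar2 (f : R2) : bar2 (bar2 f) = f := by
  induction f using AddMonoidAlgebra.induction_linear with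
  | zero => simp
  | add a b ha hb => rw [map_add, map_add, ha, hb]
  | single v r => rw [bar2_single, bar2_single, neg_neg]

lemma neg_self_R2 (b : R2) : -b = b := by
  ext v
  rw [AddMonoidAlgebra.coeff_neg, Finsupp.neg_apply, CharTwo.neg_eq]

lemma bar2_m2 (a b : ℤ) : bar2 (m2 a b) = m2 (-a) (-b) := by
  rw [m2, bar2_single]
  congr 1
  funext i; fin_cases i <;> simp

/-- Non-existence of commuting interaction terms for the 2D bosonization with global
fermion parity: the three anomaly-cancellation equations have no common solution. -/
theorem stmt_13 :
    ¬ ∃ f1 f2 : R2,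
      (1 + m2 (-1) 0) * f1 + (1 + m2 1 0) * bar2 f1 = 0 ∧
      (1 + m2 0 (-1)) * f2 + (1 + m2 0 1) * bar2 f2 = 0 ∧
      (1 + m2 (-1) 0) * f1 + (1 + m2 0 1) * bar2 f2 = 1 + m2 (-1) 1 := by
  rintro ⟨f1, f2, h1, h2, h3⟩
  have h1' : (1 + m2 1 0) * bar2 f1 = (1 + m2 (-1) 0) * f1 := by
    have := eq_neg_of_add_eq_zero_right h1
    rwa [neg_self_R2] at this
  have h2' : (1 + m2 0 (-1)) * f2 = (1 + m2 0 1) * bar2 f2 := by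
    have := eq_neg_of_add_eq_zero_left h2
    rwa [neg_self_R2] at this
  have h4 := congrArg bar2 h3
  simp only [map_add, map_mul, map_one, bar2_m2, bar2_bar2, neg_neg, neg_zero] at h4
  rw [h1', h2', h3] at h4
  have h5 : m2 (-1) 1 = m2 1 (-1) := add_left_cancel h4
  rw [m2, m2] at h5
  have h5' : (Finsupp.single ![(-1:ℤ), 1] (1 : ZMod 2)) = Finsupp.single ![1, -1] 1 := congrArg AddMonoidAlgebra.coeff h5
  have h6 := DFunLike.congr_fun h5' ![-1, 1]
  rw [Finsupp.single_apply, Finsupp.single_apply, if_pos rfl, if_neg] at h6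
  · exact one_ne_zero h6
  · intro h
    have := congrFun h 0
    simp at this
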